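/- Assume the ideal decoherence condition: for all 1 ≤ m < n and m ≤ i ≤ n, ∑_{ξ_i ∈ 𝒳} Π_{ξ^{(m,n)}} (Π_{ξ^{(m,n)}})^* = Π_{ξ^{(m,i−1)}} Π_{ξ^{(i+1,n)}} (Π_{ξ^{(m,i−1)}} Π_{ξ^{(i+1,n)}})^*. Then for every bounded function f_n on Ξ measurable with respect to Σ_{i_n,j_n}, the operator Φ(f_n) equals ∑_{ξ^{(i_n,j_n)}} f_n(ξ^{(i_n,j_n)}) Π_{ξ^{(i_n,j_n)}} (Π_{ξ^{(i_n,j_n)}})^*, and in particular Φ(f_n) belongs to the algebra ℰ_{≥ t_{i_n}} generated by the projections at times ≥ t_{i_n}. -/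

import Mathlib

open MeasureTheory Filter
open scoped ENNReal NNReal BigOperators

noncomputable section

/-- A normal state given by a density matrix, presented through a (sub-)orthonormal family
of vectors `ψ i` with `∑ ‖ψ i‖² = 1`:  `ω(A) = ∑ ⟪ψ i, A ψ i⟫`. -/
structure DensityState (H : Type*) [NormedAddCommGroup H] [InnerProductSpace ℂ H] where
  ψ : ℕ → H
  summable' : Summable fun i => ‖ψ i‖ ^ 2
  norm_one : ∑' i, ‖ψ i‖ ^ 2 = 1

/-- The value `ω(A) = tr(P_ω A)` of a normal state on an operator. -/
def DensityState.val {H : Type*} [NormedAddCommGroup H] [InnerProductSpace ℂ H]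
    (ω : DensityState H) (A : H →L[ℂ] H) : ℂ :=
  ∑' i, @inner ℂ H _ (ω.ψ i) (A (ω.ψ i))

/-- The cylinder set of histories whose first `n` outcomes are `v`. -/
def cyl {𝒳 : Type*} {n : ℕ} (v : Fin n → 𝒳) : Set (ℕ → 𝒳) :=
  {x | ∀ i : Fin n, x (i : ℕ) = v i}

/-- `Π_{ξ^{(m,n)}} = π_{ξ_m}(m) ⋯ π_{ξ_{n-1}}(n-1)` (half-open convention `[m,n)`). -/
def blockOp {H 𝒳 : Type*} [NormedAddCommGroup H] [InnerProductSpace ℂ H]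
    (π : ℕ → 𝒳 → (H →L[ℂ] H)) (m n : ℕ) (ξ : ℕ → 𝒳) : H →L[ℂ] H :=
  ((List.range' m (n - m)).map fun k => π k (ξ k)).prod

/-- `Π_{ξ^{(n)}} = π_{ξ₁}(1) ⋯ π_{ξ_n}(n)` for the first `n` outcomes `v`. -/
def histOp {H 𝒳 : Type*} [NormedAddCommGroup H] [InnerProductSpace ℂ H]
    (π : ℕ → 𝒳 → (H →L[ℂ] H)) {n : ℕ} (v : Fin n → 𝒳) : H →L[ℂ] H :=
  (List.ofFn fun i : Fin n => π (i : ℕ) (v i)).prod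

/-- `μ` is the LSW measure of the functional `φ`:
`μ(ξ₁,…,ξ_n) = φ(Π_{ξ^{(n)}} (Π_{ξ^{(n)}})^*)`. -/
def IsLSW {H 𝒳 : Type*} [NormedAddCommGroup H] [InnerProductSpace ℂ H] [CompleteSpace H]
    [MeasurableSpace 𝒳] (π : ℕ → 𝒳 → (H →L[ℂ] H)) (φ : (H →L[ℂ] H) → ℂ)
    (μ : Measure (ℕ → 𝒳)) : Prop :=
  ∀ (n : ℕ) (v : Fin n → 𝒳),
    μ (cyl v) = ENNReal.ofReal (φ (histOp π v * star (histOp π v))).re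

/-- Extension of a finite block of outcomes (coordinates `i ≤ k < j`) to a full history. -/
def extendBlock {𝒳 : Type*} [Inhabited 𝒳] (i j : ℕ) (v : Fin (j - i) → 𝒳) : ℕ → 𝒳 :=
  fun k => if h : i ≤ k ∧ k < j then v ⟨k - i, by omega⟩ else default


set_option linter.unusedSectionVars false

section Aux


local notation "⟪" x ", " y "⟫" => @inner ℂ _ _ x y

variable {H 𝒳 : Type*} [NormedAddCommGroup H] [InnerProductSpace ℂ H] [CompleteSpace H]

lemma DensityState.summable_inner (ω : DensityState H) (A : H →L[ℂ] H) :
    Summable fun n => ⟪ω.ψ n, A (ω.ψ n)⟫ := by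
  apply Summable.of_norm
  apply Summable.of_nonneg_of_le (fun n => norm_nonneg _) (fun n => ?_)
    (ω.summable'.mul_left ‖A‖)
  calc ‖⟪ω.ψ n, A (ω.ψ n)⟫‖ ≤ ‖ω.ψ n‖ * ‖A (ω.ψ n)‖ := norm_inner_le_norm _ _
    _ ≤ ‖ω.ψ n‖ * (‖A‖ * ‖ω.ψ n‖) := by
        gcongr; exact A.le_opNorm _
    _ = ‖A‖ * ‖ω.ψ n‖ ^ 2 := by ring

lemma DensityState.val_sum {ι : Type*} (s : Finset ι) (A : ι → (H →L[ℂ] H))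
    (ω : DensityState H) : ω.val (∑ t ∈ s, A t) = ∑ t ∈ s, ω.val (A t) := by
  unfold DensityState.val
  have h : ∀ n, ⟪ω.ψ n, (∑ t ∈ s, A t) (ω.ψ n)⟫ = ∑ t ∈ s, ⟪ω.ψ n, (A t) (ω.ψ n)⟫ := by
    intro n; rw [ContinuousLinearMap.sum_apply, inner_sum]
  rw [tsum_congr h, Summable.tsum_finsetSum (fun t _ => ω.summable_inner (A t))]

lemma DensityState.val_smul (c : ℂ) (A : H →L[ℂ] H) (ω : DensityState H) :
    ω.val (c • A) = c * ω.val A := by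
  unfold DensityState.val
  have h : ∀ n, ⟪ω.ψ n, (c • A) (ω.ψ n)⟫ = c * ⟪ω.ψ n, A (ω.ψ n)⟫ := by
    intro n; rw [ContinuousLinearMap.smul_apply, inner_smul_right]
  rw [tsum_congr h, tsum_mul_left]

lemma DensityState.summable_star_sq (ω : DensityState H) (A : H →L[ℂ] H) :
    Summable fun n => ‖(star A) (ω.ψ n)‖ ^ 2 := by
  apply Summable.of_nonneg_of_le (fun n => sq_nonneg _) (fun n => ?_)
    (ω.summable'.mul_left (‖star A‖ ^ 2))
  calc ‖(star A) (ω.ψ n)‖ ^ 2 ≤ (‖star A‖ * ‖ω.ψ n‖) ^ 2 := by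
        gcongr; exact (star A).le_opNorm _
    _ = ‖star A‖ ^ 2 * ‖ω.ψ n‖ ^ 2 := by ring

lemma DensityState.val_mul_star (ω : DensityState H) (A : H →L[ℂ] H) :
    ω.val (A * star A) = ((∑' n, ‖(star A) (ω.ψ n)‖ ^ 2 : ℝ) : ℂ) := by
  unfold DensityState.val
  have h : ∀ n, ⟪ω.ψ n, (A * star A) (ω.ψ n)⟫ = ((‖(star A) (ω.ψ n)‖ ^ 2 : ℝ) : ℂ) := by
    intro n
    rw [ContinuousLinearMap.mul_apply, ContinuousLinearMap.star_eq_adjoint,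
      ← ContinuousLinearMap.adjoint_inner_left, inner_self_eq_norm_sq_to_K]
    norm_cast
  rw [tsum_congr h, ← Complex.ofReal_tsum]

lemma DensityState.exists_vector_state (ψ : H) (hψ : ‖ψ‖ = 1) :
    ∃ ω : DensityState H, ∀ A : H →L[ℂ] H, ω.val A = ⟪ψ, A ψ⟫ := by
  have hs : Summable fun n : ℕ => ‖(if n = 0 then ψ else 0 : H)‖ ^ 2 := by
    apply summable_of_ne_finset_zero (s := ({0} : Finset ℕ))
    intro n hn
    rw [Finset.mem_singleton] at hn
    simp [hn]
  refine ⟨⟨fun n => if n = 0 then ψ else 0, hs, ?_⟩, ?_⟩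
  · rw [tsum_eq_single 0 (fun n hn => by simp [hn])]
    simp [hψ]
  · intro A
    unfold DensityState.val
    rw [tsum_eq_single 0 (fun n hn => by simp [hn])]
    simp

lemma eq_of_val_eq {A B : H →L[ℂ] H}
    (h : ∀ ω : DensityState H, ω.val A = ω.val B) : A = B := by
  have key : ∀ ψ : H, ⟪ψ, A ψ⟫ = ⟪ψ, B ψ⟫ := by
    intro ψ
    rcases eq_or_ne ψ 0 with rfl | hψ
    · simp
    · have hn : ‖ψ‖ ≠ 0 := norm_ne_zero_iff.mpr hψ
      set c : ℂ := ((‖ψ‖ : ℝ) : ℂ)⁻¹ with hc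
      have hcn : c ≠ 0 := by
        simp only [hc, ne_eq, inv_eq_zero, Complex.ofReal_eq_zero]
        exact hn
      have hu : ‖c • ψ‖ = 1 := by
        rw [norm_smul, hc, norm_inv, Complex.norm_real, norm_norm, inv_mul_cancel₀ hn]
      obtain ⟨ω, hω⟩ := DensityState.exists_vector_state (c • ψ) hu
      have h2 : ⟪c • ψ, A (c • ψ)⟫ = ⟪c • ψ, B (c • ψ)⟫ := by
        rw [← hω, ← hω, h ω]
      rw [A.map_smul, B.map_smul, inner_smul_left, inner_smul_left,
        inner_smul_right, inner_smul_right] at h2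
      have hcc : (starRingEnd ℂ) c ≠ 0 := by simpa using hcn
      exact mul_left_cancel₀ hcn (mul_left_cancel₀ hcc h2)
  have key2 : ∀ ψ : H, ⟪(A - B) ψ, ψ⟫ = 0 := by
    intro ψ
    rw [ContinuousLinearMap.sub_apply, inner_sub_left, sub_eq_zero]
    have := congrArg (starRingEnd ℂ) (key ψ)
    rwa [inner_conj_symm, inner_conj_symm] at this
  have h0 : ((A - B : H →L[ℂ] H) : H →ₗ[ℂ] H) = 0 := by
    rw [← inner_map_self_eq_zero]
    intro x
    exact key2 x
  have : (A - B : H →L[ℂ] H) = 0 := by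
    apply ContinuousLinearMap.coe_injective
    rw [h0]
    rfl
  exact sub_eq_zero.mp this

variable [Fintype 𝒳] (π : ℕ → 𝒳 → (H →L[ℂ] H))

lemma blockOp_self (m : ℕ) (ξ : ℕ → 𝒳) : blockOp π m m ξ = 1 := by
  simp [blockOp, Nat.sub_self]

lemma histOp_eq_blockOp {n : ℕ} (v : Fin n → 𝒳) (ξ : ℕ → 𝒳)
    (h : ∀ k : Fin n, ξ (k : ℕ) = v k) : histOp π v = blockOp π 0 n ξ := by
  unfold histOp blockOp
  congr 1
  apply List.ext_getElem
  · simp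
  · intro k h1 h2
    simp only [List.length_ofFn] at h1
    simp only [List.getElem_ofFn, List.getElem_map, List.getElem_range', Nat.one_mul,
      Nat.zero_add]
    exact congrArg (π k) ((h ⟨k, h1⟩).symm)

/-- Replace the coordinates `m, …, m+k-1` by the block `w`. -/
def writeBlock {𝒳 : Type*} (m : ℕ) {k : ℕ} (w : Fin k → 𝒳) (ξ : ℕ → 𝒳) : ℕ → 𝒳 :=
  fun r => if h : m ≤ r ∧ r < m + k then w ⟨r - m, by omega⟩ else ξ r

lemma cons_apply_zero' {𝒳 : Type*} {k : ℕ} (x : 𝒳) (w : Fin k → 𝒳)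
    (p : Fin (k + 1)) (hp : (p : ℕ) = 0) : (Fin.cons x w : Fin (k + 1) → 𝒳) p = x := by
  have : p = 0 := Fin.ext hp
  subst this; simp

lemma cons_apply_succ' {𝒳 : Type*} {k : ℕ} (x : 𝒳) (w : Fin k → 𝒳)
    (p : Fin (k + 1)) (t : ℕ) (ht : t < k) (hp : (p : ℕ) = t + 1) :
    (Fin.cons x w : Fin (k + 1) → 𝒳) p = w ⟨t, ht⟩ := by
  have h2 : p = Fin.succ ⟨t, ht⟩ := Fin.ext (by simpa using hp)
  rw [h2, Fin.cons_succ]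

lemma writeBlock_cons {𝒳 : Type*} (m k : ℕ) (x : 𝒳) (w : Fin k → 𝒳) (ξ : ℕ → 𝒳) :
    writeBlock m (Fin.cons x w : Fin (k + 1) → 𝒳) ξ
      = Function.update (writeBlock (m + 1) w ξ) m x := by
  funext r
  rcases eq_or_ne r m with rfl | hr
  · rw [Function.update_self]
    simp only [writeBlock]
    rw [dif_pos ⟨le_refl r, by omega⟩]
    exact cons_apply_zero' _ _ _ (by simp)
  · rw [Function.update_of_ne hr]
    simp only [writeBlock]
    by_cases h : m ≤ r ∧ r < m + (k + 1)
    · rw [dif_pos h, dif_pos (show m + 1 ≤ r ∧ r < (m + 1) + k by omega)]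
      exact cons_apply_succ' _ _ _ (r - (m + 1)) (by omega) (by simp; omega)
    · rw [dif_neg h, dif_neg (by omega)]

lemma sum_writeBlock (j : ℕ)
    (hdec : ∀ (ξ : ℕ → 𝒳) (m n i : ℕ), m ≤ i → i < n →
      ∑ x : 𝒳,
        blockOp π m n (Function.update ξ i x) * star (blockOp π m n (Function.update ξ i x))
        = (blockOp π m i ξ * blockOp π (i + 1) n ξ)
            * star (blockOp π m i ξ * blockOp π (i + 1) n ξ)) :
    ∀ (k m : ℕ), m + k ≤ j → ∀ ξ : ℕ → 𝒳,
      ∑ w : Fin k → 𝒳,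
        blockOp π m j (writeBlock m w ξ) * star (blockOp π m j (writeBlock m w ξ))
        = blockOp π (m + k) j ξ * star (blockOp π (m + k) j ξ) := by
  intro k
  induction k with
  | zero =>
    intro m hm ξ
    have h0 : ∀ w : Fin 0 → 𝒳, writeBlock m w ξ = ξ := by
      intro w; funext r; simp only [writeBlock]; rw [dif_neg (by omega)]
    rw [Fintype.sum_unique, h0 default]
    rfl
  | succ k ih =>
    intro m hm ξ
    have he := Equiv.sum_comp (Fin.consEquiv (fun _ : Fin (k + 1) => 𝒳))
      (fun w : Fin (k + 1) → 𝒳 =>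
        blockOp π m j (writeBlock m w ξ) * star (blockOp π m j (writeBlock m w ξ)))
    rw [← he, Fintype.sum_prod_type, Finset.sum_comm]
    have hstep : ∀ w : Fin k → 𝒳,
        (∑ x : 𝒳,
          blockOp π m j (writeBlock m (Fin.consEquiv (fun _ : Fin (k + 1) => 𝒳) (x, w)) ξ)
            * star (blockOp π m j
              (writeBlock m (Fin.consEquiv (fun _ : Fin (k + 1) => 𝒳) (x, w)) ξ)))
        = blockOp π (m + 1) j (writeBlock (m + 1) w ξ)
            * star (blockOp π (m + 1) j (writeBlock (m + 1) w ξ)) := by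
      intro w
      have h1 : ∀ x : 𝒳,
          writeBlock m (Fin.consEquiv (fun _ : Fin (k + 1) => 𝒳) (x, w)) ξ
            = Function.update (writeBlock (m + 1) w ξ) m x := by
        intro x
        have : Fin.consEquiv (fun _ : Fin (k + 1) => 𝒳) (x, w) = Fin.cons x w := rfl
        rw [this, writeBlock_cons]
      simp_rw [h1]
      rw [hdec (writeBlock (m + 1) w ξ) m j m le_rfl (by omega), blockOp_self, one_mul]
    rw [Finset.sum_congr rfl (fun w _ => hstep w), ih (m + 1) (by omega) ξ,
      show (m + 1) + k = m + (k + 1) by omega]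

end Aux

/-- under ideal decoherence, for a bounded function `f` depending only on the
outcomes `i, …, j-1`, the operator `Φ(f)` equals
`∑_{ξ^{(i,j)}} f(ξ^{(i,j)}) Π_{ξ^{(i,j)}} (Π_{ξ^{(i,j)}})^*`; in particular it lies in the
algebra generated by the instrument projections at times `≥ i`. -/
theorem Phi_of_block_function_eq_sum
    {H 𝒳 : Type*} [NormedAddCommGroup H] [InnerProductSpace ℂ H] [CompleteSpace H]
    [TopologicalSpace.SeparableSpace H]
    [Fintype 𝒳] [Inhabited 𝒳] [MeasurableSpace 𝒳] [MeasurableSingletonClass 𝒳]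
    (π : ℕ → 𝒳 → (H →L[ℂ] H))
    (hsa : ∀ k x, IsSelfAdjoint (π k x)) (hid : ∀ k x, IsIdempotentElem (π k x))
    (hsum : ∀ k, ∑ x : 𝒳, π k x = 1)
    -- ideal decoherence, for the blocks `Π_{ξ^{(m,n)}}` (half-open convention):
    (hdec : ∀ (ξ : ℕ → 𝒳) (m n i : ℕ), m ≤ i → i < n →
      ∑ x : 𝒳,
        blockOp π m n (Function.update ξ i x) * star (blockOp π m n (Function.update ξ i x))
        = (blockOp π m i ξ * blockOp π (i + 1) n ξ)
            * star (blockOp π m i ξ * blockOp π (i + 1) n ξ))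
    (μ : DensityState H → Measure (ℕ → 𝒳))
    (hμ : ∀ ω : DensityState H, IsLSW π ω.val (μ ω))
    (i j : ℕ) (hij : i < j)
    (f : (ℕ → 𝒳) → ℂ) (hf : Measurable f) (C : ℝ) (hC : ∀ ξ, ‖f ξ‖ ≤ C)
    (hdep : ∀ ξ η : ℕ → 𝒳, (∀ k, i ≤ k → k < j → ξ k = η k) → f ξ = f η)
    (Φf : H →L[ℂ] H)
    (hΦf : ∀ ω : DensityState H, ω.val Φf = ∫ ξ, f ξ ∂(μ ω)) :
    Φf = ∑ v : Fin (j - i) → 𝒳,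
        f (extendBlock i j v) •
          (blockOp π i j (extendBlock i j v) * star (blockOp π i j (extendBlock i j v)))
    ∧ Φf ∈ Algebra.adjoin ℂ {A : H →L[ℂ] H | ∃ k, i ≤ k ∧ ∃ x : 𝒳, A = π k x} := by
  classical
  -- abbreviations
  set ext : (Fin (j - i) → 𝒳) → ℕ → 𝒳 := extendBlock i j with hext
  set Blk : (Fin (j - i) → 𝒳) → (H →L[ℂ] H) :=
    fun v => blockOp π i j (ext v) * star (blockOp π i j (ext v)) with hBlk
  set T : H →L[ℂ] H := ∑ v : Fin (j - i) → 𝒳, f (ext v) • Blk v with hTdef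
  -- the projection onto the block of coordinates
  set block : (ℕ → 𝒳) → (Fin (j - i) → 𝒳) := fun ξ r => ξ (i + (r : ℕ)) with hblock
  have hmb : Measurable block := measurable_pi_lambda _ fun r => measurable_pi_apply _
  have hfg : ∀ ξ, f ξ = f (ext (block ξ)) := by
    intro ξ
    apply hdep
    intro k hk1 hk2
    simp only [hext, extendBlock, hblock]
    rw [dif_pos ⟨hk1, hk2⟩]
    congr 1
    omega
  -- gluing a prefix onto a block
  set glue : (Fin i → 𝒳) → (Fin (j - i) → 𝒳) → (Fin j → 𝒳) := fun w v p =>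
    if h : (p : ℕ) < i then w ⟨(p : ℕ), h⟩
    else v ⟨(p : ℕ) - i, by have := p.isLt; omega⟩ with hglue
  have hcylmeas : ∀ {n : ℕ} (u : Fin n → 𝒳), MeasurableSet (cyl u) := by
    intro n u
    have : cyl u = ⋂ p : Fin n, (fun ξ : ℕ → 𝒳 => ξ ((p : ℕ))) ⁻¹' {u p} := by
      ext ξ; simp [cyl]
    rw [this]
    exact MeasurableSet.iInter fun p => (measurable_pi_apply _) (measurableSet_singleton _)
  -- the operator identity behind everything
  have hop : ∀ v : Fin (j - i) → 𝒳,
      ∑ w : Fin i → 𝒳, (histOp π (glue w v) * star (histOp π (glue w v))) = Blk v := by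
    intro v
    have h1 : ∀ w : Fin i → 𝒳,
        histOp π (glue w v) = blockOp π 0 j (writeBlock 0 w (ext v)) := by
      intro w
      apply histOp_eq_blockOp
      intro p
      simp only [writeBlock, hext, extendBlock, hglue]
      by_cases h : (p : ℕ) < i
      · rw [dif_pos (show 0 ≤ (p : ℕ) ∧ (p : ℕ) < 0 + i by omega), dif_pos h]
        exact congrArg w (Fin.ext (by simp))
      · rw [dif_neg (by omega), dif_pos (show i ≤ (p : ℕ) ∧ (p : ℕ) < j from ⟨by omega, p.isLt⟩),
          dif_neg h]
    calc ∑ w : Fin i → 𝒳, (histOp π (glue w v) * star (histOp π (glue w v)))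
        = ∑ w : Fin i → 𝒳,
            blockOp π 0 j (writeBlock 0 w (ext v))
              * star (blockOp π 0 j (writeBlock 0 w (ext v))) := by
          refine Finset.sum_congr rfl fun w _ => ?_
          rw [h1 w]
      _ = blockOp π (0 + i) j (ext v) * star (blockOp π (0 + i) j (ext v)) :=
          sum_writeBlock π j hdec i 0 (by omega) (ext v)
      _ = Blk v := by rw [Nat.zero_add]
  -- decomposition of the preimage of a block into cylinders
  have hpre : ∀ v : Fin (j - i) → 𝒳,
      block ⁻¹' {v} = ⋃ w : Fin i → 𝒳, cyl (glue w v) := by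
    intro v
    ext ξ
    simp only [Set.mem_preimage, Set.mem_singleton_iff, Set.mem_iUnion]
    constructor
    · intro hv
      refine ⟨fun t => ξ (t : ℕ), fun p => ?_⟩
      simp only [hglue]
      by_cases h : (p : ℕ) < i
      · rw [dif_pos h]
      · rw [dif_neg h, ← hv]
        simp only [hblock]
        congr 1
        have := p.isLt
        omega
    · rintro ⟨w, hw⟩
      funext r
      have h1 := hw ⟨i + (r : ℕ), by have := r.isLt; omega⟩
      simp only [hglue, hblock] at h1 ⊢
      rw [dif_neg (by simp)] at h1
      rw [h1]
      congr 1
      ext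
      simp
  have hdisj : ∀ v : Fin (j - i) → 𝒳,
      Pairwise (Function.onFun Disjoint fun w : Fin i → 𝒳 => cyl (glue w v)) := by
    intro v w w' hww
    simp only [Function.onFun]
    rw [Set.disjoint_left]
    intro ξ h1 h2
    apply hww
    funext t
    have e1 := h1 ⟨(t : ℕ), by have := t.isLt; omega⟩
    have e2 := h2 ⟨(t : ℕ), by have := t.isLt; omega⟩
    simp only [hglue, Fin.val_mk] at e1 e2
    rw [dif_pos t.isLt] at e1 e2
    simp only [Fin.eta] at e1 e2
    exact e1.symm.trans e2
  -- the key: both sides have the same expectation in every normal state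
  have key : ∀ ω : DensityState H, ω.val Φf = ω.val T := by
    intro ω
    haveI hfin : IsFiniteMeasure (μ ω) := by
      constructor
      have h0 := hμ ω 0 Fin.elim0
      have hcyl0 : (cyl (Fin.elim0 : Fin 0 → 𝒳)) = Set.univ := by
        ext ξ
        constructor
        · intro _; trivial
        · intro _ p; exact p.elim0
      rw [hcyl0] at h0
      rw [h0]
      exact ENNReal.ofReal_lt_top
    have hfint : Integrable f (μ ω) :=
      ⟨hf.aestronglyMeasurable, HasFiniteIntegral.of_bounded (C := C) (Eventually.of_forall hC)⟩
    have hgmeas : Measurable (fun v : Fin (j - i) → 𝒳 => f (ext v)) := by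
      apply hf.comp
      apply measurable_pi_lambda
      intro k
      simp only [hext, extendBlock]
      by_cases h : i ≤ k ∧ k < j
      · simpa only [dif_pos h] using measurable_pi_apply _
      · simpa only [dif_neg h] using measurable_const
    -- value of the measure on the block preimages
    have hmeasv : ∀ v : Fin (j - i) → 𝒳,
        μ ω (block ⁻¹' {v})
          = ∑ w : Fin i → 𝒳,
              ENNReal.ofReal (∑' n, ‖(star (histOp π (glue w v))) (ω.ψ n)‖ ^ 2) := by
      intro v
      rw [hpre v, measure_iUnion (hdisj v) (fun w => hcylmeas _), tsum_fintype]
      refine Finset.sum_congr rfl fun w _ => ?_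
      rw [hμ ω j (glue w v), ω.val_mul_star, Complex.ofReal_re]
    have htoReal : ∀ v : Fin (j - i) → 𝒳,
        (μ ω (block ⁻¹' {v})).toReal
          = ∑ w : Fin i → 𝒳, ∑' n, ‖(star (histOp π (glue w v))) (ω.ψ n)‖ ^ 2 := by
      intro v
      rw [hmeasv v, ← ENNReal.ofReal_sum_of_nonneg
        (fun w _ => tsum_nonneg fun n => sq_nonneg _),
        ENNReal.toReal_ofReal (Finset.sum_nonneg fun w _ => tsum_nonneg fun n => sq_nonneg _)]
    -- value of the state on the block operators
    have hvalBlk : ∀ v : Fin (j - i) → 𝒳,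
        ω.val (Blk v)
          = ((∑ w : Fin i → 𝒳, ∑' n, ‖(star (histOp π (glue w v))) (ω.ψ n)‖ ^ 2 : ℝ) : ℂ) := by
      intro v
      rw [← hop v, DensityState.val_sum, Complex.ofReal_sum]
      refine Finset.sum_congr rfl fun w _ => ?_
      rw [ω.val_mul_star]
    -- the integral
    have hint : ∫ ξ, f ξ ∂(μ ω)
        = ∑ v : Fin (j - i) → 𝒳, (μ ω (block ⁻¹' {v})).toReal • f (ext v) := by
      have h1 : ∫ ξ, f ξ ∂(μ ω) = ∫ ξ, (fun v => f (ext v)) (block ξ) ∂(μ ω) := by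
        congr 1
        funext ξ
        exact hfg ξ
      have h2 : Integrable (fun v => f (ext v)) ((μ ω).map block) := by
        rw [integrable_map_measure hgmeas.aestronglyMeasurable hmb.aemeasurable]
        have : (fun v => f (ext v)) ∘ block = f := funext fun ξ => (hfg ξ).symm
        rw [this]
        exact hfint
      rw [h1, ← integral_map hmb.aemeasurable hgmeas.aestronglyMeasurable,
        integral_fintype h2]
      refine Finset.sum_congr rfl fun v _ => ?_
      rw [Measure.real, Measure.map_apply hmb (measurableSet_singleton v)]
    -- put everything together
    rw [hΦf ω, hint, hTdef, DensityState.val_sum]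
    refine Finset.sum_congr rfl fun v _ => ?_
    rw [DensityState.val_smul, hvalBlk v, htoReal v, Complex.real_smul]
    ring
  have hEq : Φf = T := eq_of_val_eq key
  -- membership in the algebra generated by the late-time projections
  set Salg := Algebra.adjoin ℂ {A : H →L[ℂ] H | ∃ k, i ≤ k ∧ ∃ x : 𝒳, A = π k x} with hSalg
  have hstarmem : ∀ L : List (H →L[ℂ] H),
      (∀ a ∈ L, a ∈ Salg ∧ star a = a) → L.prod ∈ Salg ∧ star L.prod ∈ Salg := by
    intro L
    induction L with
    | nil =>
      intro _
      simp only [List.prod_nil, star_one]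
      exact ⟨one_mem _, one_mem _⟩
    | cons a L ih =>
      intro h
      obtain ⟨ha, hastar⟩ := h a List.mem_cons_self
      obtain ⟨hL1, hL2⟩ := ih fun b hb => h b (List.mem_cons_of_mem _ hb)
      rw [List.prod_cons]
      refine ⟨mul_mem ha hL1, ?_⟩
      rw [star_mul, hastar]
      exact mul_mem hL2 ha
  have hblkmem : ∀ v : Fin (j - i) → 𝒳,
      blockOp π i j (ext v) ∈ Salg ∧ star (blockOp π i j (ext v)) ∈ Salg := by
    intro v
    apply hstarmem
    intro a ha
    simp only [List.mem_map] at ha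
    obtain ⟨k, hk, rfl⟩ := ha
    rw [List.mem_range'_1] at hk
    exact ⟨Algebra.subset_adjoin ⟨k, hk.1, _, rfl⟩, (hsa k _).star_eq⟩
  have hTmem : T ∈ Salg := by
    rw [hTdef]
    exact Subalgebra.sum_mem _ fun v _ =>
      Subalgebra.smul_mem _ (mul_mem (hblkmem v).1 (hblkmem v).2) _
  exact ⟨hEq, hEq ▸ hTmem⟩
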